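/- arXiv:1505.06837 — 4 statements merged into one kernel-verified Lean document; each statement's English description precedes it below -/
import Mathlib

section
/- Let R be a commutative ring, let m ≥ n ≥ 1 be integers, let Y ∈ R, and let A be a 2m × 2n matrix over R. Let J_m be the 2m × 2m block-diagonal matrix with m diagonal blocks equal to [[0,1],[-1,0]]. Then the determinant of the 2(m+n) × 2(m+n) block matrix [[Y·J_m, A], [-Aᵀ, 0]] equals Y^{2(m-n)} · det(Aᵀ · J_m · A). -/
open Matrix

/-- The structure matrix `J_m` of the standard non-degenerate symplectic form on `R^{2m}`:
the `2m × 2m` matrix with entries `a_{2i-1,2i} = 1`, `a_{2i,2i-1} = -1` (1-indexed) for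
`1 ≤ i ≤ m`, and all other entries zero.  In 0-indexed terms, `J i j = 1` if `i` is even and
`j = i + 1`, `J i j = -1` if `i` is odd and `i = j + 1`, and `J i j = 0` otherwise. -/
def sympJ (R : Type*) [CommRing R] (m : ℕ) : Matrix (Fin (2 * m)) (Fin (2 * m)) R :=
  Matrix.of fun i j =>
    if i.val % 2 = 0 ∧ j.val = i.val + 1 then 1
    else if i.val % 2 = 1 ∧ i.val = j.val + 1 then -1
    else 0


section Structural
variable (R : Type*) [CommRing R]

/-- reindexing equivalence -/
def sympE (m : ℕ) : Fin (2 * m) ⊕ Fin 2 ≃ Fin (2 * (m + 1)) :=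
  finSumFinEquiv.trans (finCongr (by ring))

lemma sympJ_succ (m : ℕ) :
    (sympJ R (m + 1)).submatrix (sympE m) (sympE m) =
      Matrix.fromBlocks (sympJ R m) 0 0 (sympJ R 1) := by
  ext i j
  rcases i with i | i <;> rcases j with j | j <;>
    simp only [sympE, submatrix_apply, fromBlocks_apply₁₁, fromBlocks_apply₁₂,
      fromBlocks_apply₂₁, fromBlocks_apply₂₂, Equiv.trans_apply, finCongr_apply,
      finSumFinEquiv_apply_left, finSumFinEquiv_apply_right, sympJ, of_apply,
      Fin.coe_cast, Fin.coe_castAdd, Fin.coe_natAdd, Matrix.zero_apply]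
  all_goals
    have hi := ‹Fin _›.isLt
    split_ifs <;> first | rfl | omega | (exfalso; omega)

lemma sympJ_one_sq : sympJ R 1 * sympJ R 1 = -1 := by
  have : sympJ R 1 = !![0, 1; -1, 0] := by
    ext i j
    fin_cases i <;> fin_cases j <;> simp [sympJ]
  rw [this]
  ext i j
  fin_cases i <;> fin_cases j <;> simp [Matrix.mul_apply, Fin.sum_univ_two]

lemma det_sympJ_one : (sympJ R 1).det = 1 := by
  have : sympJ R 1 = !![0, 1; -1, 0] := by
    ext i j
    fin_cases i <;> fin_cases j <;> simp [sympJ]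
  rw [this, Matrix.det_fin_two_of]
  ring

lemma sympJ_sq (m : ℕ) : sympJ R m * sympJ R m = -1 := by
  induction m with
  | zero => ext i; exact absurd i.isLt (by omega)
  | succ m ih =>
      have h : sympJ R (m + 1) =
          (Matrix.fromBlocks (sympJ R m) 0 0 (sympJ R 1)).submatrix
            (sympE m).symm (sympE m).symm := by
        rw [← sympJ_succ R m]
        simp [Matrix.submatrix_submatrix]
      rw [h, Matrix.submatrix_mul_equiv, Matrix.fromBlocks_multiply]
      simp only [Matrix.mul_zero, Matrix.zero_mul, add_zero, zero_add, ih, sympJ_one_sq R]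
      have : (Matrix.fromBlocks (-1 : Matrix (Fin (2*m)) (Fin (2*m)) R) 0 0
          (-1 : Matrix (Fin 2) (Fin 2) R)) = -1 := by
        rw [← Matrix.fromBlocks_one, Matrix.fromBlocks_neg]
        simp
      rw [this]
      ext i j
      simp [Matrix.submatrix_apply, Matrix.one_apply, Equiv.symm_apply_eq]

lemma det_sympJ (m : ℕ) : (sympJ R m).det = 1 := by
  induction m with
  | zero =>
      have : IsEmpty (Fin (2 * 0)) := by rw [show 2*0 = 0 from rfl]; exact Fin.isEmpty'
      exact Matrix.det_isEmpty
  | succ m ih =>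
      have h := congrArg Matrix.det (sympJ_succ R m)
      rw [Matrix.det_submatrix_equiv_self, Matrix.det_fromBlocks_zero₁₂] at h
      rw [h, ih, det_sympJ_one, one_mul]

end Structural

section Key
variable {R : Type*} [CommRing R]

lemma key (m n : ℕ) (hmn : n ≤ m) (Y : R) [Invertible Y]
    (A : Matrix (Fin (2 * m)) (Fin (2 * n)) R) :
    (Matrix.fromBlocks (Y • sympJ R m) A (-Aᵀ) 0).det =
      Y ^ (2 * (m - n)) * (Aᵀ * sympJ R m * A).det := by
  have hJ := sympJ_sq R m
  have hinv : (Y • sympJ R m) * ((⅟Y) • (-(sympJ R m))) = 1 := by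
    rw [Matrix.smul_mul, Matrix.mul_smul, smul_smul, mul_invOf_self,
      Matrix.mul_neg, hJ, neg_neg, one_smul]
  have hinv' : ((⅟Y) • (-(sympJ R m))) * (Y • sympJ R m) = 1 := by
    rw [Matrix.smul_mul, Matrix.mul_smul, smul_smul, invOf_mul_self,
      Matrix.neg_mul, hJ, neg_neg, one_smul]
  letI : Invertible (Y • sympJ R m) := ⟨(⅟Y) • (-(sympJ R m)), hinv', hinv⟩
  rw [Matrix.det_fromBlocks₁₁]
  have hIO : ⅟(Y • sympJ R m) = (⅟Y) • (-(sympJ R m)) := rfl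
  rw [hIO]
  have h1 : (0 : Matrix (Fin (2*n)) (Fin (2*n)) R) - (-Aᵀ) * ((⅟Y) • (-(sympJ R m))) * A
      = (-(⅟Y)) • (Aᵀ * sympJ R m * A) := by
    rw [zero_sub, Matrix.mul_smul, Matrix.smul_mul]
    rw [Matrix.neg_mul, Matrix.mul_neg, neg_neg, neg_smul]
  rw [h1, Matrix.det_smul, Matrix.det_smul, det_sympJ, mul_one]
  simp only [Fintype.card_fin]
  have hneg : (-(⅟Y)) ^ (2 * n) = (⅟Y) ^ (2 * n) := by
    rw [neg_pow, pow_mul, neg_one_sq, one_pow, one_mul]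
  rw [hneg]
  have harith : Y ^ (2 * m) * (⅟Y) ^ (2 * n) = Y ^ (2 * (m - n)) := by
    have h2 : 2 * m = 2 * (m - n) + 2 * n := by omega
    rw [h2, pow_add, mul_assoc, ← mul_pow, mul_invOf_self, one_pow, mul_one]
  rw [← mul_assoc, harith]

end Key

section Transfer
variable {R S : Type*} [CommRing R] [CommRing S]

lemma sympJ_map (g : R →+* S) (m : ℕ) : (sympJ R m).map g = sympJ S m := by
  ext i j
  simp only [Matrix.map_apply, sympJ, Matrix.of_apply]
  split_ifs <;> simp

lemma smul_map (g : R →+* S) {p q : ℕ} (Y : R) (M : Matrix (Fin p) (Fin q) R) :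
    (Y • M).map g = g Y • M.map g := by
  ext i j
  simp [Matrix.map_apply, mul_comm]

lemma map_neg' (g : R →+* S) {p q : ℕ} (M : Matrix (Fin p) (Fin q) R) :
    (-M).map g = -(M.map g) := by
  ext i j
  simp [Matrix.map_apply]

lemma map_LHS (g : R →+* S) (m n : ℕ) (Y : R) (A : Matrix (Fin (2 * m)) (Fin (2 * n)) R) :
    g ((Matrix.fromBlocks (Y • sympJ R m) A (-Aᵀ) 0).det) =
      (Matrix.fromBlocks (g Y • sympJ S m) (A.map g) (-(A.map g)ᵀ) 0).det := by
  rw [RingHom.map_det, RingHom.mapMatrix_apply,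
    Matrix.fromBlocks_map, smul_map, sympJ_map, map_neg', Matrix.transpose_map]
  congr 1
  ext i j
  simp

lemma map_RHS (g : R →+* S) (m n : ℕ) (Y : R) (A : Matrix (Fin (2 * m)) (Fin (2 * n)) R) :
    g (Y ^ (2 * (m - n)) * (Aᵀ * sympJ R m * A).det) =
      (g Y) ^ (2 * (m - n)) * ((A.map g)ᵀ * sympJ S m * (A.map g)).det := by
  rw [_root_.map_mul, map_pow, RingHom.map_det, RingHom.mapMatrix_apply, Matrix.map_mul,
    Matrix.map_mul, sympJ_map, Matrix.transpose_map]

end Transfer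

theorem det_blocks_symplectic' {R : Type*} [CommRing R] (m n : ℕ) (hn : 1 ≤ n) (hmn : n ≤ m)
    (Y : R) (A : Matrix (Fin (2 * m)) (Fin (2 * n)) R) :
    (Matrix.fromBlocks (Y • sympJ R m) A (-Aᵀ) 0).det =
      Y ^ (2 * (m - n)) * (Aᵀ * sympJ R m * A).det := by
  classical
  set σ := Unit ⊕ (Fin (2 * m) × Fin (2 * n)) with hσ
  let S := MvPolynomial σ ℤ
  let F := FractionRing S
  let Yg : S := MvPolynomial.X (Sum.inl ())
  let Ag : Matrix (Fin (2 * m)) (Fin (2 * n)) S :=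
    Matrix.of fun i j => MvPolynomial.X (Sum.inr (i, j))
  let f : S →+* F := algebraMap S F
  have hf : Function.Injective f := IsFractionRing.injective S F
  have hY0 : f Yg ≠ 0 := by
    intro h
    have : Yg = 0 := hf (by simpa using h)
    exact MvPolynomial.X_ne_zero _ this
  letI : Invertible (f Yg) := invertibleOfNonzero hY0
  have hF := key m n hmn (f Yg) (Ag.map f)
  have hS : (Matrix.fromBlocks (Yg • sympJ S m) Ag (-Agᵀ) 0).det =
      Yg ^ (2 * (m - n)) * (Agᵀ * sympJ S m * Ag).det := by
    apply hf
    rw [map_LHS, map_RHS]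
    exact hF
  let ψ : S →+* R := MvPolynomial.eval₂Hom (Int.castRingHom R)
    (Sum.elim (fun _ => Y) (fun p => A p.1 p.2))
  have hψY : ψ Yg = Y := by rw [show ψ Yg = _ from MvPolynomial.eval₂Hom_X' _ _ _]; rfl
  have hψA : Ag.map ψ = A := by
    ext i j
    rw [Matrix.map_apply, show ψ (Ag i j) = _ from MvPolynomial.eval₂Hom_X' _ _ _]; rfl
  have := congrArg ψ hS
  rw [map_LHS, map_RHS, hψY, hψA] at this
  exact this


/-- The determinant of the block matrix `[[Y·J_m, A], [-Aᵀ, 0]]` equals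
`Y^{2(m-n)} · det(Aᵀ · J_m · A)`. -/
theorem det_blocks_symplectic {R : Type*} [CommRing R] (m n : ℕ) (hn : 1 ≤ n) (hmn : n ≤ m)
    (Y : R) (A : Matrix (Fin (2 * m)) (Fin (2 * n)) R) :
    (Matrix.fromBlocks (Y • sympJ R m) A (-Aᵀ) 0).det =
      Y ^ (2 * (m - n)) * (Aᵀ * sympJ R m * A).det := by
  exact det_blocks_symplectic' m n hn hmn Y A
end

section
/- Let a, b, c be real numbers with 0 < a < 1, 0 < b < 1, c > 0, and abc < 1. Then the sum over all triples (X, Y, Z) of positive integers of a^X · b^{Y+Z} · c^{min(X, Y+Z)} converges and equals a·b²·c·(1 - a + ac - 2abc + a²b²c) / ((1 - abc)² · (1 - a) · (1 - b)²). -/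
lemma geom_pnat {r : ℝ} (h0 : 0 ≤ r) (h1 : r < 1) :
    HasSum (fun n : ℕ+ => r ^ (n : ℕ)) (r / (1 - r)) := by
  have h := (hasSum_geometric_of_lt_one h0 h1).mul_left r
  have h2 : HasSum (fun n : ℕ => r ^ (n + 1)) (r / (1 - r)) := by
    simpa [pow_succ, mul_comm, div_eq_mul_inv] using h
  have := (Equiv.pnatEquivNat.hasSum_iff (f := fun n : ℕ => r ^ (n + 1))).2 h2
  convert this using 2 with n
  have hn : (Equiv.pnatEquivNat n) + 1 = (n : ℕ) := by
    simp [Equiv.pnatEquivNat, PNat.natPred_add_one]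
  simp only [Function.comp_apply, hn]

set_option maxHeartbeats 1000000 in
/-- For `0 < a < 1`, `0 < b < 1`, `c > 0` with `abc < 1`, the sum over triples of positive
integers `(X, Y, Z)` of `a^X b^{Y+Z} c^{min(X,Y+Z)}` converges to
`ab²c(1 - a + ac - 2abc + a²b²c) / ((1 - abc)²(1 - a)(1 - b)²)`. -/
theorem hasSum_min_three (a b c : ℝ) (ha : 0 < a) (ha1 : a < 1) (hb : 0 < b) (hb1 : b < 1)
    (hc : 0 < c) (habc : a * b * c < 1) :
    HasSum (fun XYZ : ℕ+ × ℕ+ × ℕ+ =>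
        a ^ (XYZ.1 : ℕ) * b ^ ((XYZ.2.1 : ℕ) + (XYZ.2.2 : ℕ)) *
          c ^ (min (XYZ.1 : ℕ) ((XYZ.2.1 : ℕ) + (XYZ.2.2 : ℕ))))
      (a * b ^ 2 * c * (1 - a + a * c - 2 * a * b * c + a ^ 2 * b ^ 2 * c) /
        ((1 - a * b * c) ^ 2 * (1 - a) * (1 - b) ^ 2)) := by
  set t := a * b * c with ht_def
  have ht0 : 0 ≤ t := by positivity
  have hb0 : (0:ℝ) ≤ b := hb.le
  have ha0 : (0:ℝ) ≤ a := ha.le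
  -- basic sums
  have hq : HasSum (fun n : ℕ+ => t ^ (n : ℕ)) (t / (1 - t)) := geom_pnat ht0 habc
  have hA : HasSum (fun n : ℕ+ => a ^ (n : ℕ)) (a / (1 - a)) := geom_pnat ha0 ha1
  have hBp : HasSum (fun n : ℕ+ => b ^ (n : ℕ)) (b / (1 - b)) := geom_pnat hb0 hb1
  have hBn : HasSum (fun n : ℕ => b ^ n) ((1 - b)⁻¹) := hasSum_geometric_of_lt_one hb0 hb1
  have hqnn : 0 ≤ fun n : ℕ+ => t ^ (n : ℕ) := fun n => by positivity
  have hann : 0 ≤ fun n : ℕ+ => a ^ (n : ℕ) := fun n => by positivity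
  have hbpnn : 0 ≤ fun n : ℕ+ => b ^ (n : ℕ) := fun n => by positivity
  have hbnnn : 0 ≤ fun n : ℕ => b ^ n := fun n => by positivity
  -- the function
  set f : ℕ+ × ℕ+ × ℕ+ → ℝ := fun p =>
    a ^ (p.1 : ℕ) * b ^ ((p.2.1 : ℕ) + (p.2.2 : ℕ)) *
      c ^ (min (p.1 : ℕ) ((p.2.1 : ℕ) + (p.2.2 : ℕ))) with hf_def
  set f1 : ℕ+ × ℕ+ × ℕ+ → ℝ := fun p => if (p.1 : ℕ) ≤ (p.2.1 : ℕ) then f p else 0 with hf1_def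
  set f2 : ℕ+ × ℕ+ × ℕ+ → ℝ := fun p =>
    if (p.2.1 : ℕ) < (p.1 : ℕ) ∧ (p.1 : ℕ) ≤ (p.2.1 : ℕ) + (p.2.2 : ℕ) then f p else 0
    with hf2_def
  set f3 : ℕ+ × ℕ+ × ℕ+ → ℝ := fun p =>
    if (p.2.1 : ℕ) + (p.2.2 : ℕ) < (p.1 : ℕ) then f p else 0 with hf3_def
  -- Piece 1 : X ≤ Y, substitution (x, i, z) ↦ (x, x + i, z)
  have h1 : HasSum f1 ((t / (1 - t)) * ((1 - b)⁻¹ * (b / (1 - b)))) := by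
    have hs1 := Summable.mul_of_nonneg hBn.summable hBp.summable hbnnn hbpnn
    have hin0 := HasSum.mul hBn hBp hs1
    have hinner : HasSum (fun p : ℕ × ℕ+ => b ^ p.1 * b ^ (p.2 : ℕ))
        ((1 - b)⁻¹ * (b / (1 - b))) := hin0
    have hs2 := Summable.mul_of_nonneg hq.summable hinner.summable hqnn
      (fun p => mul_nonneg (hbnnn p.1) (hbpnn p.2))
    have hout0 := HasSum.mul hq hinner hs2
    have houter : HasSum (fun p : ℕ+ × ℕ × ℕ+ => t ^ (p.1 : ℕ) * (b ^ p.2.1 * b ^ (p.2.2 : ℕ)))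
        ((t / (1 - t)) * ((1 - b)⁻¹ * (b / (1 - b)))) := hout0
    set e1 : ℕ+ × ℕ × ℕ+ → ℕ+ × ℕ+ × ℕ+ := fun p =>
      (p.1, ⟨(p.1 : ℕ) + p.2.1, Nat.add_pos_left p.1.pos _⟩, p.2.2) with he1_def
    have hinj : Function.Injective e1 := by
      rintro ⟨x, i, z⟩ ⟨x', i', z'⟩ h
      have hx : (x : ℕ) = (x' : ℕ) := congrArg (fun p : ℕ+ × ℕ+ × ℕ+ => (p.1 : ℕ)) h
      have hyy : (x : ℕ) + i = (x' : ℕ) + i' := congrArg (fun p : ℕ+ × ℕ+ × ℕ+ => (p.2.1 : ℕ)) h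
      have hz : z = z' := congrArg (fun p : ℕ+ × ℕ+ × ℕ+ => p.2.2) h
      simp only [Prod.mk.injEq]
      exact ⟨PNat.coe_injective hx, by omega, hz⟩
    have hvan : ∀ p ∉ Set.range e1, f1 p = 0 := by
      rintro ⟨x, y, z⟩ hp
      simp only [hf1_def]
      split_ifs with h
      · exfalso; apply hp
        refine ⟨(x, (y : ℕ) - (x : ℕ), z), ?_⟩
        simp only [he1_def, Prod.mk.injEq, true_and, and_true]
        exact Prod.ext (PNat.coe_injective (show (x : ℕ) + ((y : ℕ) - (x : ℕ)) = y by omega)) rfl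
      · rfl
    have hcomp : (f1 ∘ e1) = fun p : ℕ+ × ℕ × ℕ+ =>
        t ^ (p.1 : ℕ) * (b ^ p.2.1 * b ^ (p.2.2 : ℕ)) := by
      funext ⟨x, i, z⟩
      simp only [Function.comp_apply, he1_def, hf1_def, hf_def, PNat.mk_coe]
      simp only [show (x : ℕ) ≤ (x : ℕ) + i by omega, if_true]
      rw [min_eq_left (by omega)]
      rw [ht_def]
      rw [pow_add, pow_add, mul_pow, mul_pow]
      ring
    exact (hinj.hasSum_iff hvan).1 (hcomp ▸ houter)
  -- Piece 2 : Y < X ≤ Y + Z, substitution (y, j, k) ↦ (y + j, y, j + k)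
  have h2 : HasSum f2 ((t / (1 - t)) * ((t / (1 - t)) * (1 - b)⁻¹)) := by
    have hs1 := Summable.mul_of_nonneg hq.summable hBn.summable hqnn hbnnn
    have hin0 := HasSum.mul hq hBn hs1
    have hinner : HasSum (fun p : ℕ+ × ℕ => t ^ (p.1 : ℕ) * b ^ p.2)
        ((t / (1 - t)) * (1 - b)⁻¹) := hin0
    have hs2 := Summable.mul_of_nonneg hq.summable hinner.summable hqnn
      (fun p => mul_nonneg (hqnn p.1) (hbnnn p.2))
    have hout0 := HasSum.mul hq hinner hs2
    have houter : HasSum (fun p : ℕ+ × ℕ+ × ℕ => t ^ (p.1 : ℕ) * (t ^ (p.2.1 : ℕ) * b ^ p.2.2))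
        ((t / (1 - t)) * ((t / (1 - t)) * (1 - b)⁻¹)) := hout0
    set e2 : ℕ+ × ℕ+ × ℕ → ℕ+ × ℕ+ × ℕ+ := fun p =>
      (p.1 + p.2.1, p.1, ⟨(p.2.1 : ℕ) + p.2.2, Nat.add_pos_left p.2.1.pos _⟩) with he2_def
    have hinj : Function.Injective e2 := by
      rintro ⟨y, j, k⟩ ⟨y', j', k'⟩ h
      have h1' : (y : ℕ) + (j : ℕ) = (y' : ℕ) + (j' : ℕ) :=
        congrArg (fun p : ℕ+ × ℕ+ × ℕ+ => (p.1 : ℕ)) h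
      have h2' : (y : ℕ) = (y' : ℕ) := congrArg (fun p : ℕ+ × ℕ+ × ℕ+ => (p.2.1 : ℕ)) h
      have h3' : (j : ℕ) + k = (j' : ℕ) + k' := congrArg (fun p : ℕ+ × ℕ+ × ℕ+ => (p.2.2 : ℕ)) h
      simp only [Prod.mk.injEq]
      exact ⟨PNat.coe_injective h2', PNat.coe_injective (by omega), by omega⟩
    have hvan : ∀ p ∉ Set.range e2, f2 p = 0 := by
      rintro ⟨x, y, z⟩ hp
      simp only [hf2_def]
      split_ifs with h
      · exfalso; apply hp
        refine ⟨(y, ⟨(x : ℕ) - (y : ℕ), by omega⟩, (y : ℕ) + (z : ℕ) - (x : ℕ)), ?_⟩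
        simp only [he2_def, Prod.mk.injEq, true_and, and_true]
        constructor
        · exact PNat.coe_injective (show (y : ℕ) + ((x : ℕ) - (y : ℕ)) = x by omega)
        · exact Prod.ext rfl (PNat.coe_injective (show ((x : ℕ) - (y : ℕ)) + ((y : ℕ) + (z : ℕ) - (x : ℕ)) = z by omega))
      · rfl
    have hcomp : (f2 ∘ e2) = fun p : ℕ+ × ℕ+ × ℕ =>
        t ^ (p.1 : ℕ) * (t ^ (p.2.1 : ℕ) * b ^ p.2.2) := by
      funext ⟨y, j, k⟩
      have hj := j.pos
      simp only [Function.comp_apply, he2_def, hf2_def, hf_def, PNat.mk_coe, PNat.add_coe]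
      simp only [show (y : ℕ) < (y : ℕ) + (j : ℕ) ∧ (y : ℕ) + (j : ℕ) ≤ (y : ℕ) + ((j : ℕ) + k) by constructor <;> omega, and_self, if_true]
      rw [min_eq_left (by omega)]
      rw [ht_def]
      rw [pow_add, pow_add, pow_add, pow_add, mul_pow, mul_pow, mul_pow, mul_pow]
      ring
    exact (hinj.hasSum_iff hvan).1 (hcomp ▸ houter)
  -- Piece 3 : Y + Z < X, substitution (k, y, z) ↦ (y + z + k, y, z)
  have h3 : HasSum f3 ((a / (1 - a)) * ((t / (1 - t)) * (t / (1 - t)))) := by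
    have hs1 := Summable.mul_of_nonneg hq.summable hq.summable hqnn hqnn
    have hin0 := HasSum.mul hq hq hs1
    have hinner : HasSum (fun p : ℕ+ × ℕ+ => t ^ (p.1 : ℕ) * t ^ (p.2 : ℕ))
        ((t / (1 - t)) * (t / (1 - t))) := hin0
    have hs2 := Summable.mul_of_nonneg hA.summable hinner.summable hann
      (fun p => mul_nonneg (hqnn p.1) (hqnn p.2))
    have hout0 := HasSum.mul hA hinner hs2
    have houter : HasSum
        (fun p : ℕ+ × ℕ+ × ℕ+ => a ^ (p.1 : ℕ) * (t ^ (p.2.1 : ℕ) * t ^ (p.2.2 : ℕ)))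
        ((a / (1 - a)) * ((t / (1 - t)) * (t / (1 - t)))) := hout0
    set e3 : ℕ+ × ℕ+ × ℕ+ → ℕ+ × ℕ+ × ℕ+ := fun p =>
      (p.2.1 + p.2.2 + p.1, p.2.1, p.2.2) with he3_def
    have hinj : Function.Injective e3 := by
      rintro ⟨k, y, z⟩ ⟨k', y', z'⟩ h
      have h1' : (y : ℕ) + (z : ℕ) + (k : ℕ) = (y' : ℕ) + (z' : ℕ) + (k' : ℕ) :=
        congrArg (fun p : ℕ+ × ℕ+ × ℕ+ => (p.1 : ℕ)) h
      have h2' : (y : ℕ) = (y' : ℕ) := congrArg (fun p : ℕ+ × ℕ+ × ℕ+ => (p.2.1 : ℕ)) h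
      have h3' : (z : ℕ) = (z' : ℕ) := congrArg (fun p : ℕ+ × ℕ+ × ℕ+ => (p.2.2 : ℕ)) h
      simp only [Prod.mk.injEq]
      exact ⟨PNat.coe_injective (by omega), PNat.coe_injective h2', PNat.coe_injective h3'⟩
    have hvan : ∀ p ∉ Set.range e3, f3 p = 0 := by
      rintro ⟨x, y, z⟩ hp
      simp only [hf3_def]
      split_ifs with h
      · exfalso; apply hp
        refine ⟨(⟨(x : ℕ) - ((y : ℕ) + (z : ℕ)), by omega⟩, y, z), ?_⟩
        simp only [he3_def, Prod.mk.injEq, true_and, and_true]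
        exact PNat.coe_injective (show (y : ℕ) + (z : ℕ) + ((x : ℕ) - ((y : ℕ) + (z : ℕ))) = x by omega)
      · rfl
    have hcomp : (f3 ∘ e3) = fun p : ℕ+ × ℕ+ × ℕ+ =>
        a ^ (p.1 : ℕ) * (t ^ (p.2.1 : ℕ) * t ^ (p.2.2 : ℕ)) := by
      funext ⟨k, y, z⟩
      have hk := k.pos
      simp only [Function.comp_apply, he3_def, hf3_def, hf_def, PNat.add_coe]
      simp only [show (y : ℕ) + (z : ℕ) < (y : ℕ) + (z : ℕ) + (k : ℕ) by omega, if_true]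
      rw [min_eq_right (by omega)]
      rw [ht_def]
      rw [pow_add, pow_add, pow_add, mul_pow, mul_pow]
      ring
    exact (hinj.hasSum_iff hvan).1 (hcomp ▸ houter)
  -- combine
  have hsum := (h1.add h2).add h3
  have hfeq : f = fun p => f1 p + f2 p + f3 p := by
    funext ⟨x, y, z⟩
    simp only [hf1_def, hf2_def, hf3_def]
    split_ifs <;> first | omega | ring
  have hfinal : HasSum f
      ((t / (1 - t)) * ((1 - b)⁻¹ * (b / (1 - b))) +
        (t / (1 - t)) * ((t / (1 - t)) * (1 - b)⁻¹) +
        (a / (1 - a)) * ((t / (1 - t)) * (t / (1 - t)))) := by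
    rw [hfeq]; exact hsum
  have hta : (1 : ℝ) - a ≠ 0 := by linarith
  have htb : (1 : ℝ) - b ≠ 0 := by linarith
  have habc' : (1 : ℝ) - a * b * c ≠ 0 := by rw [← ht_def]; linarith
  have hval : (t / (1 - t)) * ((1 - b)⁻¹ * (b / (1 - b))) +
        (t / (1 - t)) * ((t / (1 - t)) * (1 - b)⁻¹) +
        (a / (1 - a)) * ((t / (1 - t)) * (t / (1 - t))) =
      a * b ^ 2 * c * (1 - a + a * c - 2 * a * b * c + a ^ 2 * b ^ 2 * c) /
        ((1 - a * b * c) ^ 2 * (1 - a) * (1 - b) ^ 2) := by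
    rw [ht_def]
    field_simp
    ring
  exact hval ▸ hfinal
end

section
/- Let p be a prime, q = p, and let μ be the Haar measure on ℤ_p² = ℤ_p × ℤ_p normalized so that μ(ℤ_p²) = 1. Then for all real numbers s, t > 0, the integral over (x, y) ∈ pℤ_p × pℤ_p of |x|_p^s · max(|x|_p, |y|_p)^t with respect to μ equals q^{-2-s-t}(1 - q^{-2-s})(1 - q^{-1}) / ((1 - q^{-2-s-t})(1 - q^{-1-s})). -/
open MeasureTheory ENNReal

noncomputable instance padicIntMeasurableSpace (p : ℕ) [Fact p.Prime] :
    MeasurableSpace ℤ_[p] := borel _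

instance padicIntBorelSpace (p : ℕ) [Fact p.Prime] : BorelSpace ℤ_[p] := ⟨rfl⟩

/-- The Haar measure on `ℤ_[p]`, normalized so that `ℤ_[p]` itself has measure `1`. -/
noncomputable def padicHaar (p : ℕ) [Fact p.Prime] : Measure ℤ_[p] :=
  Measure.addHaarMeasure ⊤

instance padicHaarProb (p : ℕ) [Fact p.Prime] : IsProbabilityMeasure (padicHaar p) := ⟨by
  simpa [padicHaar] using
    Measure.addHaarMeasure_self (K₀ := (⊤ : TopologicalSpace.PositiveCompacts ℤ_[p]))⟩

instance padicHaarInv (p : ℕ) [Fact p.Prime] : (padicHaar p).IsAddLeftInvariant := by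
  unfold padicHaar; infer_instance

variable {p : ℕ} [Fact p.Prime]

lemma padic_measurableSet_ball (n : ℕ) :
    MeasurableSet {x : ℤ_[p] | ‖x‖ ≤ (p : ℝ) ^ (-n : ℤ)} :=
  (isClosed_le continuous_norm continuous_const).measurableSet

lemma padic_nat_coset_inj (n : ℕ) (k l : ℕ) (hk : k < p ^ n) (hl : l < p ^ n)
    (h : (p : ℤ_[p]) ^ n ∣ ((k : ℤ_[p]) - l)) : k = l := by
  have h2 : (p : ℤ_[p]) ^ n ∣ ((k - l : ℤ) : ℤ_[p]) := by push_cast at h ⊢; exact h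
  rw [PadicInt.pow_p_dvd_int_iff] at h2
  have hd : (p : ℤ) ^ n ∣ (k : ℤ) - l := h2
  have := Int.eq_zero_of_dvd_of_natAbs_lt_natAbs hd ?_
  · omega
  · have : ((k:ℤ) - l).natAbs < p ^ n := by omega
    simpa [Int.natAbs_pow] using this

lemma padicHaar_ball (n : ℕ) :
    padicHaar p {x : ℤ_[p] | ‖x‖ ≤ (p : ℝ) ^ (-n : ℤ)} = ((p : ℝ≥0∞) ^ n)⁻¹ := by
  set B : Set ℤ_[p] := {x : ℤ_[p] | ‖x‖ ≤ (p : ℝ) ^ (-n : ℤ)} with hB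
  have hmem : ∀ x : ℤ_[p], x ∈ B ↔ (p : ℤ_[p]) ^ n ∣ x := by
    intro x
    rw [hB, Set.mem_setOf_eq, PadicInt.norm_le_pow_iff_mem_span_pow,
      Ideal.mem_span_singleton]
  set C : ℕ → Set ℤ_[p] := fun k => (fun x => x - (k : ℤ_[p])) ⁻¹' B with hC
  have hcover : (Set.univ : Set ℤ_[p]) = ⋃ k ∈ Finset.range (p ^ n), C k := by
    ext x
    simp only [Set.mem_univ, true_iff, Set.mem_iUnion, Set.mem_preimage, hC]
    refine ⟨x.appr n, Finset.mem_range.mpr (PadicInt.appr_lt x n), ?_⟩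
    rw [hmem, ← Ideal.mem_span_singleton]
    simpa using PadicInt.appr_spec n x
  have hCmeas : ∀ k : ℕ, MeasurableSet (C k) := fun k =>
    (padic_measurableSet_ball n).preimage
      ((continuous_id.sub continuous_const).measurable)
  have hCdisj : (↑(Finset.range (p ^ n)) : Set ℕ).PairwiseDisjoint C := by
    intro k hk l hl hkl
    simp only [Finset.coe_range, Set.mem_Iio] at hk hl
    refine Set.disjoint_left.mpr fun x hxk hxl => hkl ?_
    rw [hC, Set.mem_preimage, hmem] at hxk hxl
    exact padic_nat_coset_inj n k l hk hl (by
      have := dvd_sub hxl hxk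
      simpa using this)
  have hCmeasure : ∀ k : ℕ, padicHaar p (C k) = padicHaar p B := by
    intro k
    have : C k = (fun x => (-(k : ℤ_[p])) + x) ⁻¹' B := by
      ext x; simp [hC, sub_eq_neg_add, add_comm]
    rw [this, measure_preimage_add]
  have h1 : (1 : ℝ≥0∞) = (p ^ n : ℕ) * padicHaar p B := by
    calc (1 : ℝ≥0∞) = padicHaar p Set.univ := (measure_univ).symm
      _ = padicHaar p (⋃ k ∈ Finset.range (p ^ n), C k) := by rw [← hcover]
      _ = ∑ k ∈ Finset.range (p ^ n), padicHaar p (C k) :=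
          measure_biUnion_finset hCdisj fun k _ => hCmeas k
      _ = ∑ _k ∈ Finset.range (p ^ n), padicHaar p B := by
          simp only [hCmeasure]
      _ = (p ^ n : ℕ) * padicHaar p B := by
          rw [Finset.sum_const, Finset.card_range, nsmul_eq_mul]
  have hpn : ((p ^ n : ℕ) : ℝ≥0∞) ≠ 0 := by
    simp [pow_ne_zero, Nat.Prime.ne_zero (Fact.out : p.Prime)]
  have hpn' : ((p ^ n : ℕ) : ℝ≥0∞) ≠ ⊤ := by simp
  have hBval : padicHaar p B = ((p ^ n : ℕ) : ℝ≥0∞)⁻¹ := by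
    calc padicHaar p B = ((p ^ n : ℕ) : ℝ≥0∞)⁻¹ * ((p ^ n : ℕ) * padicHaar p B) := by
          rw [← mul_assoc, ENNReal.inv_mul_cancel hpn hpn', one_mul]
      _ = ((p ^ n : ℕ) : ℝ≥0∞)⁻¹ := by rw [← h1, mul_one]
  rw [hBval]; norm_cast

def pball (p : ℕ) [Fact p.Prime] (n : ℕ) : Set ℤ_[p] := {x : ℤ_[p] | ‖x‖ ≤ (p : ℝ) ^ (-n : ℤ)}

def psphere (p : ℕ) [Fact p.Prime] (n : ℕ) : Set ℤ_[p] :=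
  {x : ℤ_[p] | ‖x‖ = (p : ℝ) ^ (-(n + 1 : ℕ) : ℤ)}

lemma psphere_eq (n : ℕ) : psphere p n = pball p (n + 1) \ pball p (n + 2) := by
  ext x
  simp only [psphere, pball, Set.mem_diff, Set.mem_setOf_eq]
  constructor
  · intro h
    refine ⟨le_of_eq h, ?_⟩
    rw [h]
    intro hc
    have h2 : ((p:ℝ)) ^ (-(n + 1 : ℕ) : ℤ) ≤ (p:ℝ) ^ (-(n + 2 : ℕ) : ℤ) := hc
    have hp1 : (1:ℝ) < (p:ℝ) := by exact_mod_cast (Fact.out : p.Prime).one_lt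
    rw [zpow_le_zpow_iff_right₀ hp1] at h2
    omega
  · rintro ⟨h1, h2⟩
    rcases lt_or_eq_of_le h1 with h | h
    · exfalso
      apply h2
      have h3 := (PadicInt.norm_lt_pow_iff_norm_le_pow_sub_one x (-(n + 1 : ℕ) : ℤ)).mp h
      have he : (-(n + 1 : ℕ) : ℤ) - 1 = (-(n + 2 : ℕ) : ℤ) := by push_cast; ring
      rwa [he] at h3
    · exact h

lemma measurableSet_psphere (n : ℕ) : MeasurableSet (psphere p n) := by
  rw [psphere_eq]; exact (padic_measurableSet_ball _).diff (padic_measurableSet_ball _)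

lemma pball_antitone {m n : ℕ} (h : m ≤ n) : pball p n ⊆ pball p m := by
  intro x hx
  simp only [pball, Set.mem_setOf_eq] at hx ⊢
  refine le_trans hx ?_
  exact zpow_le_zpow_right₀ (by exact_mod_cast (Fact.out : p.Prime).one_le) (by omega)

lemma padicHaar_psphere (n : ℕ) :
    padicHaar p (psphere p n) = ((p : ℝ≥0∞) ^ (n+1))⁻¹ - ((p : ℝ≥0∞) ^ (n+2))⁻¹ := by
  rw [psphere_eq, measure_diff (pball_antitone (by omega))
    (padic_measurableSet_ball _).nullMeasurableSet (measure_ne_top _ _)]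
  rw [show pball p (n+1) = {x : ℤ_[p] | ‖x‖ ≤ (p : ℝ) ^ (-(n+1 : ℕ) : ℤ)} from rfl,
    show pball p (n+2) = {x : ℤ_[p] | ‖x‖ ≤ (p : ℝ) ^ (-(n+2 : ℕ) : ℤ)} from rfl,
    padicHaar_ball, padicHaar_ball]

lemma padicHaar_zero : padicHaar p {(0 : ℤ_[p])} = 0 := by
  have hle : ∀ n : ℕ, padicHaar p {(0 : ℤ_[p])} ≤ ((p : ℝ≥0∞) ^ n)⁻¹ := by
    intro n
    rw [← padicHaar_ball n]
    apply measure_mono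
    intro x hx
    simp only [Set.mem_singleton_iff] at hx
    simp [hx, pball]
  have hp1 : (1:ℝ≥0∞) < (p:ℝ≥0∞) := by exact_mod_cast (Fact.out : p.Prime).one_lt
  have htend : Filter.Tendsto (fun n : ℕ => ((p : ℝ≥0∞) ^ n)⁻¹) Filter.atTop (nhds 0) := by
    simp_rw [ENNReal.inv_pow]
    exact ENNReal.tendsto_pow_atTop_nhds_zero_of_lt_one (ENNReal.inv_lt_one.mpr hp1)
  exact le_antisymm (ge_of_tendsto' htend hle) zero_le

lemma mem_psphere_of {x : ℤ_[p]} (hx : x ≠ 0) (h1 : ‖x‖ < 1) : ∃ m : ℕ, x ∈ psphere p m := by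
  have hp1 : (1:ℝ) < (p:ℝ) := by exact_mod_cast (Fact.out : p.Prime).one_lt
  have hv := PadicInt.norm_eq_zpow_neg_valuation hx
  have hv0 : 0 < x.valuation := by
    by_contra hc
    push_neg at hc
    have h0 : x.valuation = 0 := le_antisymm hc (Nat.zero_le _)
    rw [hv, h0] at h1; simp at h1
  refine ⟨x.valuation - 1, ?_⟩
  show ‖x‖ = _
  rw [hv]
  congr 1
  push_cast
  omega

lemma psphere_lt_one (m : ℕ) : ((p:ℝ)) ^ (-(m + 1 : ℕ) : ℤ) < 1 := by
  have hp1 : (1:ℝ) < (p:ℝ) := by exact_mod_cast (Fact.out : p.Prime).one_lt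
  calc ((p:ℝ)) ^ (-(m + 1 : ℕ) : ℤ) < (p:ℝ) ^ (0 : ℤ) :=
        zpow_lt_zpow_right₀ hp1 (by push_cast; omega)
    _ = 1 := zpow_zero _

lemma psphere_disjoint {m n : ℕ} (h : m ≠ n) : Disjoint (psphere p m) (psphere p n) := by
  have hp1 : (1:ℝ) < (p:ℝ) := by exact_mod_cast (Fact.out : p.Prime).one_lt
  refine Set.disjoint_left.mpr fun x hxm hxn => ?_
  have h1 : ((p:ℝ)) ^ (-(m + 1 : ℕ) : ℤ) = ((p:ℝ)) ^ (-(n + 1 : ℕ) : ℤ) := by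
    rw [← hxm, ← hxn]
  have := (zpow_right_strictMono₀ hp1).injective h1
  omega

set_option maxHeartbeats 1000000 in
lemma tsum_min_eval {A B C : ℝ} (hA0 : 0 < A) (hA1 : A < 1) (hB0 : 0 < B) (hB1 : B < 1)
    (hC0 : 0 < C) (hC1 : C < 1) :
    ∑' i : ℕ × ℕ, A ^ (i.1 + 1) * B ^ (i.2 + 1) * C ^ (min i.1 i.2 + 1)
      = A * B * C * (1 - A * B) / ((1 - A * B * C) * (1 - A) * (1 - B)) := by
  have hBC0 : 0 < B * C := by positivity
  have hBC1 : B * C < 1 := by nlinarith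
  have hABC0 : 0 < A * B * C := by positivity
  have hABC1 : A * B * C < 1 := by nlinarith
  set a : ℝ := B * C / (1 - B * C) with ha
  set b : ℝ := 1 / (1 - B) - 1 / (1 - B * C) with hb
  have hsumA : Summable (fun m : ℕ => A ^ (m + 1)) := by
    simpa [pow_succ] using (summable_geometric_of_lt_one hA0.le hA1).mul_right A
  have hsumB : Summable (fun n : ℕ => B ^ (n + 1)) := by
    simpa [pow_succ] using (summable_geometric_of_lt_one hB0.le hB1).mul_right B
  have hsumABC : Summable (fun m : ℕ => (A * B * C) ^ (m + 1)) := by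
    simpa [pow_succ] using (summable_geometric_of_lt_one hABC0.le hABC1).mul_right (A * B * C)
  have hprod : Summable (fun i : ℕ × ℕ => A ^ (i.1 + 1) * B ^ (i.2 + 1)) :=
    hsumA.mul_of_nonneg hsumB (fun m => by positivity) (fun n => by positivity)
  have hterm : Summable (fun i : ℕ × ℕ => A ^ (i.1 + 1) * B ^ (i.2 + 1) * C ^ (min i.1 i.2 + 1)) := by
    refine Summable.of_nonneg_of_le (fun i => by positivity) (fun i => ?_) hprod
    have h1 : C ^ (min i.1 i.2 + 1) ≤ 1 := pow_le_one₀ hC0.le hC1.le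
    calc A ^ (i.1 + 1) * B ^ (i.2 + 1) * C ^ (min i.1 i.2 + 1)
        ≤ A ^ (i.1 + 1) * B ^ (i.2 + 1) * 1 := by
          apply mul_le_mul_of_nonneg_left h1 (by positivity)
      _ = A ^ (i.1 + 1) * B ^ (i.2 + 1) := mul_one _
  have hinner : ∀ m : ℕ, Summable (fun n : ℕ => A ^ (m + 1) * B ^ (n + 1) * C ^ (min m n + 1)) := by
    intro m
    refine Summable.of_nonneg_of_le (fun n => by positivity) (fun n => ?_)
      ((hsumB.mul_left (A ^ (m+1))))
    have h1 : C ^ (min m n + 1) ≤ 1 := pow_le_one₀ hC0.le hC1.le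
    calc A ^ (m + 1) * B ^ (n + 1) * C ^ (min m n + 1)
        ≤ A ^ (m + 1) * B ^ (n + 1) * 1 := mul_le_mul_of_nonneg_left h1 (by positivity)
      _ = A ^ (m + 1) * B ^ (n + 1) := mul_one _
  rw [Summable.tsum_prod' hterm hinner]
  have hval : ∀ m : ℕ, ∑' n : ℕ, A ^ (m + 1) * B ^ (n + 1) * C ^ (min m n + 1)
      = a * A ^ (m + 1) + b * (A * B * C) ^ (m + 1) := by
    intro m
    rw [← Summable.sum_add_tsum_nat_add m (hinner m)]
    have hfin : ∑ n ∈ Finset.range m, A ^ (m + 1) * B ^ (n + 1) * C ^ (min m n + 1)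
        = A ^ (m + 1) * ((B * C) * (((B * C) ^ m - 1) / ((B * C) - 1))) := by
      have h1 : ∀ n ∈ Finset.range m, A ^ (m + 1) * B ^ (n + 1) * C ^ (min m n + 1)
          = (A ^ (m + 1) * (B * C)) * (B * C) ^ n := by
        intro n hn
        rw [Finset.mem_range] at hn
        rw [min_eq_right (by omega : n ≤ m), mul_pow]
        ring
      rw [Finset.sum_congr rfl h1, ← Finset.mul_sum, geom_sum_eq (by nlinarith : B * C ≠ 1)]
      ring
    have htail : ∑' n : ℕ, A ^ (m + 1) * B ^ (n + m + 1) * C ^ (min m (n + m) + 1)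
        = (A * B * C) ^ (m + 1) * (1 - B)⁻¹ := by
      have h1 : ∀ n : ℕ, A ^ (m + 1) * B ^ (n + m + 1) * C ^ (min m (n + m) + 1)
          = ((A * B * C) ^ (m + 1)) * B ^ n := by
        intro n
        rw [min_eq_left (by omega : m ≤ n + m)]
        rw [mul_pow, mul_pow, show n + m + 1 = (m + 1) + n by omega, pow_add]
        ring
      simp_rw [h1]
      rw [tsum_mul_left, tsum_geometric_of_lt_one hB0.le hB1]
    rw [hfin, htail]
    have hx1 : (B * C) - 1 ≠ 0 := by nlinarith
    have hx2 : (1 : ℝ) - B ≠ 0 := by nlinarith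
    have hx3 : (1 : ℝ) - B * C ≠ 0 := by nlinarith
    have hQ : (A * B * C) ^ (m + 1) = A ^ (m + 1) * (B * C) ^ (m + 1) := by
      rw [← mul_pow]; ring_nf
    rw [ha, hb, hQ, pow_succ (B * C) m]
    field_simp
    ring
  rw [tsum_congr hval, Summable.tsum_add (hsumA.mul_left a) (hsumABC.mul_left b),
    tsum_mul_left, tsum_mul_left]
  have hpow : ∀ (x : ℝ) (m : ℕ), x ^ (m + 1) = x * x ^ m := fun x m => by
    rw [pow_succ]; ring
  have hgA : ∑' m : ℕ, A ^ (m + 1) = A * (1 - A)⁻¹ := by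
    simp_rw [hpow]
    rw [tsum_mul_left, tsum_geometric_of_lt_one hA0.le hA1]
  have hgABC : ∑' m : ℕ, (A * B * C) ^ (m + 1) = (A * B * C) * (1 - A * B * C)⁻¹ := by
    simp_rw [hpow]
    rw [tsum_mul_left, tsum_geometric_of_lt_one hABC0.le hABC1]
  rw [hgA, hgABC, ha, hb]
  have hx1 : (1 : ℝ) - A ≠ 0 := by nlinarith
  have hx2 : (1 : ℝ) - B ≠ 0 := by nlinarith
  have hx3 : (1 : ℝ) - B * C ≠ 0 := by nlinarith
  have hx4 : (1 : ℝ) - A * B * C ≠ 0 := by nlinarith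
  field_simp
  have hx5 : (1 : ℝ) - B * A * C ≠ 0 := by nlinarith
  field_simp
  ring

lemma padicHaar_psphere_toReal (m : ℕ) :
    (padicHaar p (psphere p m)).toReal = (p:ℝ)⁻¹ ^ (m+1) * (1 - (p:ℝ)⁻¹) := by
  have hp0 : (0:ℝ) < (p:ℝ) := by exact_mod_cast (Fact.out : p.Prime).pos
  have hp1 : (1:ℝ≥0∞) ≤ (p:ℝ≥0∞) := by
    exact_mod_cast Nat.one_le_cast.mpr (Fact.out : p.Prime).one_le
  have hpne : (p:ℝ≥0∞) ≠ 0 := by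
    exact_mod_cast Nat.cast_ne_zero.mpr (Fact.out : p.Prime).ne_zero
  rw [padicHaar_psphere]
  have hle : ((p : ℝ≥0∞) ^ (m+2))⁻¹ ≤ ((p : ℝ≥0∞) ^ (m+1))⁻¹ :=
    ENNReal.inv_le_inv.mpr (pow_le_pow_right₀ hp1 (by omega))
  have hne : ((p : ℝ≥0∞) ^ (m+1))⁻¹ ≠ ⊤ := by
    simp [ENNReal.inv_ne_top, pow_ne_zero, hpne]
  rw [ENNReal.toReal_sub_of_le hle hne]
  simp only [ENNReal.toReal_inv, ENNReal.toReal_pow, ENNReal.toReal_natCast]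
  have hp0' : (p:ℝ) ≠ 0 := ne_of_gt hp0
  field_simp
  rw [one_div_pow]
  field_simp
  ring

/-- `∫_{pℤ_p × pℤ_p} |x|^s max(|x|,|y|)^t dμ
  = q^{-2-s-t}(1-q^{-2-s})(1-q^{-1}) / ((1-q^{-2-s-t})(1-q^{-1-s}))`, where `q = p` and `μ` is
the Haar measure on `ℤ_p²` with `μ(ℤ_p²) = 1`.  Here `pℤ_p = {x : ‖x‖ < 1}`. -/
theorem integral_x_max_xy (p : ℕ) [Fact p.Prime] (s t : ℝ) (hs : 0 < s) (ht : 0 < t) :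
    ∫ z in {z : ℤ_[p] × ℤ_[p] | ‖z.1‖ < 1 ∧ ‖z.2‖ < 1},
        ‖z.1‖ ^ s * max ‖z.1‖ ‖z.2‖ ^ t ∂((padicHaar p).prod (padicHaar p)) =
      (p : ℝ) ^ (-2 - s - t) * (1 - (p : ℝ) ^ (-2 - s)) * (1 - (p : ℝ)⁻¹) /
        ((1 - (p : ℝ) ^ (-2 - s - t)) * (1 - (p : ℝ) ^ (-1 - s))) := by
  have hp0 : (0:ℝ) < (p:ℝ) := by exact_mod_cast (Fact.out : p.Prime).pos
  have hp1 : (1:ℝ) < (p:ℝ) := by exact_mod_cast (Fact.out : p.Prime).one_lt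
  set μ := padicHaar p
  set f : ℤ_[p] × ℤ_[p] → ℝ := fun z => ‖z.1‖ ^ s * max ‖z.1‖ ‖z.2‖ ^ t with hf
  set D : Set (ℤ_[p] × ℤ_[p]) := {z : ℤ_[p] × ℤ_[p] | ‖z.1‖ < 1 ∧ ‖z.2‖ < 1} with hD
  set T : ℕ × ℕ → Set (ℤ_[p] × ℤ_[p]) := fun i => psphere p i.1 ×ˢ psphere p i.2 with hT
  -- continuity / integrability
  have hfc : Continuous f := by
    apply Continuous.mul
    · exact (continuous_fst.norm).rpow_const (fun x => Or.inr hs.le)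
    · exact ((continuous_fst.norm).max (continuous_snd.norm)).rpow_const (fun x => Or.inr ht.le)
  have hfi : Integrable f (μ.prod μ) := by
    apply hfc.integrable_of_hasCompactSupport
    exact IsCompact.of_isClosed_subset isCompact_univ (isClosed_tsupport f) (Set.subset_univ _)
  -- measurability and disjointness of the sphere products
  have hTmeas : ∀ i : ℕ × ℕ, MeasurableSet (T i) := fun i =>
    (measurableSet_psphere i.1).prod (measurableSet_psphere i.2)
  have hTdisj : Pairwise (Function.onFun Disjoint T) := by
    intro i j hij
    have hne : i.1 ≠ j.1 ∨ i.2 ≠ j.2 := by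
      by_contra hc
      push_neg at hc
      exact hij (Prod.ext hc.1 hc.2)
    refine Set.disjoint_left.mpr fun z hzi hzj => ?_
    obtain ⟨h1i, h2i⟩ := hzi
    obtain ⟨h1j, h2j⟩ := hzj
    rcases hne with h | h
    · exact Set.disjoint_left.mp (psphere_disjoint h) h1i h1j
    · exact Set.disjoint_left.mp (psphere_disjoint h) h2i h2j
  -- D is a.e. equal to the union of sphere products
  have hsub : (⋃ i, T i) ⊆ D := by
    rintro z hz
    simp only [Set.mem_iUnion] at hz
    obtain ⟨i, h1, h2⟩ := hz
    have e1 : ‖z.1‖ = (p:ℝ) ^ (-(i.1 + 1 : ℕ) : ℤ) := h1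
    have e2 : ‖z.2‖ = (p:ℝ) ^ (-(i.2 + 1 : ℕ) : ℤ) := h2
    exact ⟨by rw [e1]; exact psphere_lt_one i.1, by rw [e2]; exact psphere_lt_one i.2⟩
  have hae : D =ᵐ[μ.prod μ] ⋃ i, T i := by
    rw [MeasureTheory.ae_eq_set]
    constructor
    · have hnull2 : (μ.prod μ) (({(0:ℤ_[p])} ×ˢ (Set.univ : Set ℤ_[p]))
          ∪ ((Set.univ : Set ℤ_[p]) ×ˢ {(0:ℤ_[p])})) = 0 := by
        apply measure_union_null
        · rw [Measure.prod_prod, padicHaar_zero, zero_mul]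
        · rw [Measure.prod_prod, padicHaar_zero, mul_zero]
      refine measure_mono_null ?_ hnull2
      rintro z ⟨hzD, hzU⟩
      by_cases h1 : z.1 = 0
      · exact Or.inl ⟨h1, Set.mem_univ _⟩
      by_cases h2 : z.2 = 0
      · exact Or.inr ⟨Set.mem_univ _, h2⟩
      exfalso
      obtain ⟨m, hm⟩ := mem_psphere_of h1 hzD.1
      obtain ⟨n, hn⟩ := mem_psphere_of h2 hzD.2
      exact hzU (Set.mem_iUnion.mpr ⟨(m, n), hm, hn⟩)
    · rw [Set.diff_eq_empty.mpr hsub]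
      exact measure_empty
  rw [setIntegral_congr_set hae, integral_iUnion hTmeas hTdisj hfi.integrableOn]
  -- evaluate each piece
  set B : ℝ := (p:ℝ)⁻¹ with hB
  set A : ℝ := (p:ℝ)⁻¹ * (p:ℝ) ^ (-s) with hA
  set C : ℝ := (p:ℝ) ^ (-t) with hC
  have hkey : ∀ (m : ℕ) (u : ℝ), ((p:ℝ) ^ (-(m+1:ℕ) : ℤ)) ^ u = ((p:ℝ) ^ (-u)) ^ (m + 1) := by
    intro m u
    rw [← Real.rpow_intCast (p:ℝ) (-(m+1:ℕ):ℤ), ← Real.rpow_natCast ((p:ℝ) ^ (-u)) (m+1),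
      ← Real.rpow_mul hp0.le, ← Real.rpow_mul hp0.le]
    congr 1
    push_cast
    ring
  have hpiece : ∀ i : ℕ × ℕ, ∫ z in T i, f z ∂(μ.prod μ)
      = (1 - B)^2 * (A ^ (i.1 + 1) * B ^ (i.2 + 1) * C ^ (min i.1 i.2 + 1)) := by
    rintro ⟨m, n⟩
    have hconst : Set.EqOn f
        (fun _ => ((p:ℝ) ^ (-s)) ^ (m+1) * ((p:ℝ) ^ (-t)) ^ (min m n + 1)) (T (m, n)) := by
      rintro z ⟨h1, h2⟩
      have e1 : ‖z.1‖ = (p:ℝ) ^ (-(m + 1 : ℕ) : ℤ) := h1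
      have e2 : ‖z.2‖ = (p:ℝ) ^ (-(n + 1 : ℕ) : ℤ) := h2
      have emax : max ‖z.1‖ ‖z.2‖ = (p:ℝ) ^ (-(min m n + 1 : ℕ) : ℤ) := by
        rw [e1, e2, ← Monotone.map_max (zpow_right_mono₀ hp1.le)]
        congr 1
        push_cast
        omega
      show ‖z.1‖ ^ s * max ‖z.1‖ ‖z.2‖ ^ t = _
      rw [emax, e1, hkey m s, hkey (min m n) t]
    rw [setIntegral_congr_fun (hTmeas (m, n)) hconst, setIntegral_const]
    rw [show T (m, n) = psphere p m ×ˢ psphere p n from rfl, measureReal_def, Measure.prod_prod,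
      ENNReal.toReal_mul, padicHaar_psphere_toReal, padicHaar_psphere_toReal, smul_eq_mul]
    rw [hA, hC, mul_pow]
    ring
  rw [tsum_congr hpiece, tsum_mul_left]
  have hA0 : 0 < A := by
    have := Real.rpow_pos_of_pos hp0 (-s)
    positivity
  have hB0 : 0 < B := by rw [hB]; positivity
  have hC0 : 0 < C := Real.rpow_pos_of_pos hp0 _
  have hA1 : A < 1 := by
    have h1 : (p:ℝ) ^ (-s) < 1 := Real.rpow_lt_one_of_one_lt_of_neg hp1 (by linarith)
    have h2 : (p:ℝ)⁻¹ ≤ 1 := by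
      rw [inv_le_one_iff₀]; right; linarith
    have h3 : 0 < (p:ℝ) ^ (-s) := Real.rpow_pos_of_pos hp0 (-s)
    rw [hA]
    nlinarith
  have hB1 : B < 1 := by rw [hB, inv_lt_one_iff₀]; right; exact hp1
  have hC1 : C < 1 := Real.rpow_lt_one_of_one_lt_of_neg hp1 (by linarith)
  rw [tsum_min_eval hA0 hA1 hB0 hB1 hC0 hC1]
  -- final algebra
  have hABe : A * B = (p:ℝ) ^ (-2-s) := by
    rw [hA, hB, show ((p:ℝ))⁻¹ = (p:ℝ) ^ (-1 : ℝ) by rw [Real.rpow_neg_one],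
      ← Real.rpow_add hp0, ← Real.rpow_add hp0, show (-1 + -s + -1 : ℝ) = -2 - s by ring]
  have hABCe : A * B * C = (p:ℝ) ^ (-2-s-t) := by
    rw [hABe, hC, ← Real.rpow_add hp0, show (-2 - s + -t : ℝ) = -2 - s - t by ring]
  have hAe : A = (p:ℝ) ^ (-1-s) := by
    rw [hA, show ((p:ℝ))⁻¹ = (p:ℝ) ^ (-1 : ℝ) by rw [Real.rpow_neg_one],
      ← Real.rpow_add hp0, show (-1 + -s : ℝ) = -1 - s by ring]
  rw [← hABCe, ← hABe, ← hAe]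
  have hx1 : (1 : ℝ) - A ≠ 0 := by nlinarith
  have hx2 : (1 : ℝ) - B ≠ 0 := by nlinarith
  have hBC1 : B * C < 1 := by nlinarith
  have hABC1 : A * B * C < 1 := by nlinarith
  have hx4 : (1 : ℝ) - A * B * C ≠ 0 := by nlinarith
  field_simp
end

section
/- Let p be a prime, q = p, and let μ be the Haar measure on ℤ_p⁵ normalized so that μ(ℤ_p⁵) = 1, with coordinates (x, y, ỹ₁, ỹ₂, ỹ₃). Let Ω₄ be the set of points in (pℤ_p)⁵ whose p-adic valuations (X, Y, Ỹ₁, Ỹ₂, Ỹ₃) satisfy Y < X, Y = Ỹ₁, Y ≤ Ỹ₂ and Y ≤ Ỹ₃. Then for all real numbers ρ, τ > 0, the integral over Ω₄ of |x|_p^τ · |ỹ₁|_p^{2ρ} · max(|x|_p, |y|_p)^{2ρ} dμ equals q^{-6-2τ-4ρ}(1 - q^{-1})³ / ((1 - q^{-1-τ})(1 - q^{-5-τ-4ρ})). -/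
open MeasureTheory ENNReal NNReal

/-- The product Haar measure on `ℤ_p⁵`, with coordinates `(x, y, ỹ₁, ỹ₂, ỹ₃)`, normalized
to total mass `1`. -/
noncomputable def padicHaar5 (p : ℕ) [Fact p.Prime] :
    Measure (ℤ_[p] × ℤ_[p] × ℤ_[p] × ℤ_[p] × ℤ_[p]) :=
  (padicHaar p).prod ((padicHaar p).prod ((padicHaar p).prod
    ((padicHaar p).prod (padicHaar p))))

variable {p : ℕ} [Fact p.Prime]

/-- closed ball of radius p^{-m} -/
def pBall (p : ℕ) [Fact p.Prime] (m : ℕ) : Set ℤ_[p] := {x | ‖x‖ ≤ (p:ℝ)^(-(m:ℤ))}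

lemma measurableSet_pBall (m : ℕ) : MeasurableSet (pBall p m) :=
  (isClosed_le continuous_norm continuous_const).measurableSet

instance : (padicHaar p).IsAddLeftInvariant := by
  unfold padicHaar; infer_instance

lemma pBall_cover (m : ℕ) :
    (Set.univ : Set ℤ_[p]) = ⋃ k ∈ Finset.range (p^m), (-(k:ℤ_[p]) + ·) ⁻¹' (pBall p m) := by
  ext x
  simp only [Set.mem_univ, Set.mem_iUnion, true_iff, Finset.mem_range, Set.mem_preimage]
  refine ⟨x.appr m, x.appr_lt m, ?_⟩
  show ‖-(x.appr m : ℤ_[p]) + x‖ ≤ _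
  rw [neg_add_eq_sub, PadicInt.norm_le_pow_iff_mem_span_pow]
  exact PadicInt.appr_spec m x

lemma measure_pBall (m : ℕ) : padicHaar p (pBall p m) = ((p:ℝ≥0∞)^m)⁻¹ := by
  have hdisj : Set.PairwiseDisjoint (Finset.range (p^m) : Set ℕ)
      (fun k => (-(k:ℤ_[p]) + ·) ⁻¹' (pBall p m)) := by
    intro k hk l hl hkl
    simp only [Finset.coe_range, Set.mem_Iio] at hk hl
    refine Set.disjoint_left.2 fun x hx hx' => hkl ?_
    simp only [Set.mem_preimage, pBall, Set.mem_setOf_eq, neg_add_eq_sub] at hx hx'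
    have hnorm : ‖((((k:ℤ) - (l:ℤ)) : ℤ) : ℤ_[p])‖ ≤ (p:ℝ)^(-(m:ℤ)) := by
      have he : ((((k:ℤ) - (l:ℤ)) : ℤ) : ℤ_[p]) = (x - (l:ℤ_[p])) + (-(x - (k:ℤ_[p]))) := by
        push_cast; ring
      rw [he]
      refine le_trans (PadicInt.nonarchimedean _ _) (max_le hx' ?_)
      rwa [norm_neg]
    have hdvd : ((p:ℤ)^m) ∣ ((k:ℤ) - (l:ℤ)) := PadicInt.norm_int_le_pow_iff_dvd.mp hnorm
    have hk' : (k:ℤ) < (p:ℤ)^m := by exact_mod_cast hk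
    have hl' : (l:ℤ) < (p:ℤ)^m := by exact_mod_cast hl
    have h0 : (0:ℤ) ≤ (k:ℤ) := Int.natCast_nonneg k
    have h0' : (0:ℤ) ≤ (l:ℤ) := Int.natCast_nonneg l
    have hz := Int.eq_zero_of_abs_lt_dvd hdvd (abs_sub_lt_iff.2 ⟨by omega, by omega⟩)
    exact_mod_cast sub_eq_zero.mp hz
  have h1 : padicHaar p (Set.univ) = 1 := measure_univ
  rw [pBall_cover m, measure_biUnion_finset hdisj
    (fun k _ => (measurableSet_pBall m).preimage (measurable_const_add _))] at h1
  simp only [measure_preimage_add, Finset.sum_const, Finset.card_range, nsmul_eq_mul] at h1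
  have hp0 : ((p:ℝ≥0∞)^m) ≠ 0 := by
    have : (p:ℝ≥0∞) ≠ 0 := by exact_mod_cast (Nat.Prime.pos Fact.out).ne'
    positivity
  have h2 : padicHaar p (pBall p m) * (p:ℝ≥0∞)^m = 1 := by
    rw [mul_comm]; rw [← h1]; norm_cast
  exact ENNReal.eq_inv_of_mul_eq_one_left h2

def pSph (p : ℕ) [Fact p.Prime] (m : ℕ) : Set ℤ_[p] := pBall p m \ pBall p (m+1)

lemma measurableSet_pSph (m : ℕ) : MeasurableSet (pSph p m) :=
  (measurableSet_pBall m).diff (measurableSet_pBall (m+1))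

lemma pBall_succ_subset (m : ℕ) : pBall p (m+1) ⊆ pBall p m := by
  intro x hx
  have hx' : ‖x‖ ≤ (p:ℝ)^(-((m+1:ℕ):ℤ)) := hx
  show ‖x‖ ≤ (p:ℝ)^(-(m:ℤ))
  exact le_trans hx' (zpow_le_zpow_right₀ (show (1:ℝ) ≤ p by exact_mod_cast (Fact.out : p.Prime).one_le)
    (show (-((m+1:ℕ):ℤ)) ≤ -(m:ℤ) by push_cast; omega))

lemma mem_pSph_iff {m : ℕ} {x : ℤ_[p]} : x ∈ pSph p m ↔ ‖x‖ = (p:ℝ)^(-(m:ℤ)) := by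
  constructor
  · rintro ⟨h1, h2⟩
    refine le_antisymm h1 ?_
    by_contra hlt
    push_neg at hlt
    apply h2
    show ‖x‖ ≤ (p:ℝ)^(-((m+1:ℕ)):ℤ)
    rw [PadicInt.norm_le_pow_iff_norm_lt_pow_add_one]
    convert hlt using 2
    · exact rfl
    · push_cast; ring
  · intro h
    refine ⟨le_of_eq h, fun h2 => ?_⟩
    replace h2 : ‖x‖ ≤ (p:ℝ)^(-((m+1:ℕ):ℤ)) := h2
    rw [h] at h2
    have : ((-(m+1:ℕ):ℤ)) < (-(m:ℤ)) := by push_cast; omega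
    have := zpow_lt_zpow_right₀ (show (1:ℝ) < p by exact_mod_cast (Fact.out : p.Prime).one_lt) this
    exact absurd h2 (not_le.mpr this)

lemma measure_pSph (m : ℕ) :
    padicHaar p (pSph p m) = ((p:ℝ≥0∞)^m)⁻¹ - ((p:ℝ≥0∞)^(m+1))⁻¹ := by
  rw [pSph, measure_diff (pBall_succ_subset m) (measurableSet_pBall (m+1)).nullMeasurableSet
    (by finiteness), measure_pBall, measure_pBall]

lemma measure_singleton_zero : padicHaar p ({0} : Set ℤ_[p]) = 0 := by
  have hle : ∀ n : ℕ, padicHaar p ({0} : Set ℤ_[p]) ≤ ((p:ℝ≥0∞)⁻¹)^n := by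
    intro n
    rw [← ENNReal.inv_pow, ← measure_pBall n]
    apply measure_mono
    intro x hx
    simp only [Set.mem_singleton_iff] at hx
    subst hx
    show ‖(0:ℤ_[p])‖ ≤ _
    simp only [norm_zero]
    positivity
  have hlt : (p:ℝ≥0∞)⁻¹ < 1 := by
    rw [ENNReal.inv_lt_one]
    exact_mod_cast (Fact.out : p.Prime).one_lt
  have htend := ENNReal.tendsto_pow_atTop_nhds_zero_of_lt_one hlt
  exact le_antisymm (ge_of_tendsto' htend (fun n => hle n) |>.trans (le_refl 0)) (zero_le)

lemma pBall_subset {m n : ℕ} (h : m ≤ n) : pBall p n ⊆ pBall p m := by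
  intro x hx
  have hx' : ‖x‖ ≤ (p:ℝ)^(-(n:ℤ)) := hx
  show ‖x‖ ≤ (p:ℝ)^(-(m:ℤ))
  exact le_trans hx' (zpow_le_zpow_right₀
    (show (1:ℝ) ≤ p by exact_mod_cast (Fact.out : p.Prime).one_le) (by omega))

lemma pSph_disjoint : Pairwise fun a b : ℕ => Disjoint (pSph p a) (pSph p b) := by
  intro a b hab
  refine Set.disjoint_left.2 fun x hx hx' => hab ?_
  rw [mem_pSph_iff] at hx hx'
  have := zpow_right_injective₀ (show (0:ℝ) < p by exact_mod_cast (Fact.out : p.Prime).pos)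
    (show (p:ℝ) ≠ 1 by exact_mod_cast (Fact.out : p.Prime).ne_one) (hx ▸ hx')
  omega

lemma pBall_ae_eq (m : ℕ) :
    (pBall p m : Set ℤ_[p]) =ᵐ[padicHaar p] ⋃ j : ℕ, pSph p (m+j) := by
  rw [Filter.eventuallyEq_set]
  have h1 : (⋃ j : ℕ, pSph p (m+j)) ⊆ pBall p m := by
    rintro x hx
    simp only [Set.mem_iUnion] at hx
    obtain ⟨j, hj⟩ := hx
    exact pBall_subset (Nat.le_add_right m j) hj.1
  have h2 : pBall p m \ (⋃ j : ℕ, pSph p (m+j)) ⊆ {0} := by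
    intro x ⟨hx1, hx2⟩
    simp only [Set.mem_iUnion, Set.mem_singleton_iff] at hx2 ⊢
    by_contra hx0
    apply hx2
    have hval := PadicInt.norm_eq_zpow_neg_valuation hx0
    have hvnn : 0 ≤ x.valuation := Nat.zero_le _
    have hxle : ‖x‖ ≤ (p:ℝ)^(-(m:ℤ)) := hx1
    rw [hval] at hxle
    have hmv : (m:ℤ) ≤ x.valuation := by
      have := (zpow_le_zpow_iff_right₀
        (show (1:ℝ) < p by exact_mod_cast (Fact.out : p.Prime).one_lt)).mp hxle
      omega
    refine ⟨(x.valuation - m), ?_⟩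
    rw [mem_pSph_iff, hval]
    congr 1
    omega
  have h0 : ∀ᵐ x ∂padicHaar p, x ∉ ({0} : Set ℤ_[p]) :=
    measure_eq_zero_iff_ae_notMem.mp measure_singleton_zero
  filter_upwards [h0] with x hx0
  constructor
  · intro hb
    by_contra hu
    exact hx0 (h2 ⟨hb, hu⟩)
  · exact fun hu => h1 hu

lemma sphere_lintegral (s : ℝ) (m : ℕ) :
    ∫⁻ x in pSph p m, ENNReal.ofReal (‖x‖ ^ s) ∂padicHaar p
      = ENNReal.ofReal (((p:ℝ)^(-(m:ℤ)))^s) * padicHaar p (pSph p m) := by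
  rw [setLIntegral_congr_fun (measurableSet_pSph m)
    (fun x hx => by rw [mem_pSph_iff.mp hx]), setLIntegral_const]

lemma ball_lintegral (s : ℝ) (m : ℕ) :
    ∫⁻ x in pBall p m, ENNReal.ofReal (‖x‖ ^ s) ∂padicHaar p
      = ∑' j : ℕ, ENNReal.ofReal (((p:ℝ)^(-((m+j:ℕ):ℤ)))^s) * padicHaar p (pSph p (m+j)) := by
  rw [Measure.restrict_congr_set (pBall_ae_eq m), lintegral_iUnion
    (fun j => measurableSet_pSph (m+j)) (fun i j hij => pSph_disjoint (by omega))]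
  exact tsum_congr fun j => sphere_lintegral s (m+j)

lemma hq1 : (1:ℝ) < p := by exact_mod_cast (Fact.out : p.Prime).one_lt
lemma hq0 : (0:ℝ) < p := lt_trans one_pos hq1

lemma ofReal_inv_pow (m : ℕ) :
    ((p:ℝ≥0∞)^m)⁻¹ = ENNReal.ofReal (((p:ℝ)⁻¹)^m) := by
  rw [ENNReal.ofReal_pow (by positivity), ENNReal.ofReal_inv_of_pos hq0,
    ENNReal.ofReal_natCast, ← ENNReal.inv_pow]

lemma measure_pBall' (m : ℕ) :
    padicHaar p (pBall p m) = ENNReal.ofReal (((p:ℝ)⁻¹)^m) := by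
  rw [measure_pBall, ofReal_inv_pow]

lemma measure_pSph' (m : ℕ) :
    padicHaar p (pSph p m) = ENNReal.ofReal (((p:ℝ)⁻¹)^m * (1 - (p:ℝ)⁻¹)) := by
  have : ((p:ℝ)⁻¹)^m * (1 - (p:ℝ)⁻¹) = ((p:ℝ)⁻¹)^m - ((p:ℝ)⁻¹)^(m+1) := by ring
  rw [measure_pSph, this, ENNReal.ofReal_sub _ (by positivity), ofReal_inv_pow, ofReal_inv_pow]

lemma ball_lintegral_value (τ : ℝ) (hτ : 0 < τ) (m : ℕ) :
    ∫⁻ x in pBall p m, ENNReal.ofReal (‖x‖ ^ τ) ∂padicHaar p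
      = ENNReal.ofReal ((1 - (p:ℝ)⁻¹) * ((p:ℝ)^(-(1:ℝ)-τ))^m / (1 - (p:ℝ)^(-(1:ℝ)-τ))) := by
  set q : ℝ := (p:ℝ) with hqdef
  set A : ℝ := q ^ (-(1:ℝ)-τ) with hAdef
  have h1 : (1:ℝ) < q := hq1
  have h0 : (0:ℝ) < q := hq0
  have hA0 : 0 < A := Real.rpow_pos_of_pos h0 _
  have hA1 : A < 1 := Real.rpow_lt_one_of_one_lt_of_neg h1 (by linarith)
  rw [ball_lintegral]
  have hterm : ∀ j : ℕ, ENNReal.ofReal ((q^(-((m+j:ℕ)):ℤ))^τ) * padicHaar p (pSph p (m+j))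
      = ENNReal.ofReal (((1 - q⁻¹) * A^m) * A^j) := by
    intro j
    rw [measure_pSph', ← ENNReal.ofReal_mul (by positivity)]
    congr 1
    have e1 : (q^(-((m+j:ℕ)):ℤ))^τ = q ^ (-((m+j:ℕ):ℝ) * τ) := by
      rw [← Real.rpow_intCast q, ← Real.rpow_mul h0.le]
      norm_num
    have e2 : (q⁻¹)^(m+j) = q ^ (-((m+j:ℕ):ℝ)) := by
      rw [Real.rpow_neg h0.le, Real.rpow_natCast, inv_pow]
    have e3 : A^m * A^j = q ^ ((-(1:ℝ)-τ) * ((m+j:ℕ):ℝ)) := by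
      rw [← pow_add, ← Real.rpow_natCast A, ← Real.rpow_mul h0.le]
    calc (q^(-((m+j:ℕ)):ℤ))^τ * ((q⁻¹)^(m+j) * (1 - q⁻¹))
        = (1 - q⁻¹) * (q ^ (-((m+j:ℕ):ℝ) * τ) * q ^ (-((m+j:ℕ):ℝ))) := by rw [e1, e2]; ring
      _ = (1 - q⁻¹) * q ^ ((-(1:ℝ)-τ) * ((m+j:ℕ):ℝ)) := by
            rw [← Real.rpow_add h0]; congr 1; ring
      _ = ((1 - q⁻¹) * A^m) * A^j := by rw [mul_assoc, e3]
  have hc : (0:ℝ) ≤ 1 - q⁻¹ := by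
    rw [sub_nonneg]
    exact inv_le_one_of_one_le₀ h1.le
  rw [tsum_congr hterm, ← ENNReal.ofReal_tsum_of_nonneg
    (fun j => mul_nonneg (mul_nonneg hc (pow_nonneg hA0.le m)) (pow_nonneg hA0.le j))
    ((summable_geometric_of_lt_one hA0.le hA1).mul_left _),
    _root_.tsum_mul_left, tsum_geometric_of_lt_one hA0.le hA1, div_eq_mul_inv]

lemma sphere_lintegral_value (s : ℝ) (m : ℕ) :
    ∫⁻ x in pSph p m, ENNReal.ofReal (‖x‖ ^ s) ∂padicHaar p
      = ENNReal.ofReal ((1 - (p:ℝ)⁻¹) * ((p:ℝ)^(-(1:ℝ)-s))^m) := by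
  have h1 : (1:ℝ) < (p:ℝ) := hq1
  have h0 : (0:ℝ) < (p:ℝ) := hq0
  rw [sphere_lintegral, measure_pSph', ← ENNReal.ofReal_mul (by positivity)]
  congr 1
  have e1 : ((p:ℝ)^(-(m:ℕ):ℤ))^s = (p:ℝ) ^ (-((m:ℕ):ℝ) * s) := by
    rw [← Real.rpow_intCast (p:ℝ), ← Real.rpow_mul h0.le]
    norm_num
  have e2 : ((p:ℝ)⁻¹)^m = (p:ℝ) ^ (-((m:ℕ):ℝ)) := by
    rw [Real.rpow_neg h0.le, Real.rpow_natCast, inv_pow]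
  have e3 : ((p:ℝ)^(-(1:ℝ)-s))^m = (p:ℝ) ^ ((-(1:ℝ)-s) * ((m:ℕ):ℝ)) := by
    rw [← Real.rpow_natCast ((p:ℝ)^(-(1:ℝ)-s)), ← Real.rpow_mul h0.le]
  calc ((p:ℝ)^(-(m:ℕ):ℤ))^s * (((p:ℝ)⁻¹)^m * (1 - (p:ℝ)⁻¹))
      = (1 - (p:ℝ)⁻¹) * ((p:ℝ) ^ (-((m:ℕ):ℝ) * s) * (p:ℝ) ^ (-((m:ℕ):ℝ))) := by
        rw [e1, e2]; ring
    _ = (1 - (p:ℝ)⁻¹) * ((p:ℝ)^(-(1:ℝ)-s))^m := by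
        rw [← Real.rpow_add h0, e3]; congr 1; ring

lemma lintegral_prod5 (f1 f2 f3 f4 f5 : ℤ_[p] → ℝ≥0∞)
    (h1 : Measurable f1) (h2 : Measurable f2) (h3 : Measurable f3)
    (h4 : Measurable f4) (h5 : Measurable f5) (s1 s2 s3 s4 s5 : Set ℤ_[p]) :
    ∫⁻ z in s1 ×ˢ (s2 ×ˢ (s3 ×ˢ (s4 ×ˢ s5))),
      f1 z.1 * f2 z.2.1 * f3 z.2.2.1 * f4 z.2.2.2.1 * f5 z.2.2.2.2 ∂(padicHaar5 p)
    = (∫⁻ x in s1, f1 x ∂padicHaar p) * (∫⁻ x in s2, f2 x ∂padicHaar p) *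
      (∫⁻ x in s3, f3 x ∂padicHaar p) * (∫⁻ x in s4, f4 x ∂padicHaar p) *
      (∫⁻ x in s5, f5 x ∂padicHaar p) := by
  have m45 : Measurable fun w : ℤ_[p] × ℤ_[p] => f4 w.1 * f5 w.2 :=
    (h4.comp measurable_fst).mul (h5.comp measurable_snd)
  have m345 : Measurable fun w : ℤ_[p] × ℤ_[p] × ℤ_[p] =>
      f3 w.1 * (f4 w.2.1 * f5 w.2.2) :=
    (h3.comp measurable_fst).mul (m45.comp measurable_snd)
  have m2345 : Measurable fun w : ℤ_[p] × ℤ_[p] × ℤ_[p] × ℤ_[p] =>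
      f2 w.1 * (f3 w.2.1 * (f4 w.2.2.1 * f5 w.2.2.2)) :=
    (h2.comp measurable_fst).mul (m345.comp measurable_snd)
  rw [padicHaar5, ← Measure.prod_restrict, ← Measure.prod_restrict,
    ← Measure.prod_restrict, ← Measure.prod_restrict]
  simp only [mul_assoc]
  rw [lintegral_prod_mul h1.aemeasurable m2345.aemeasurable]
  rw [lintegral_prod_mul h2.aemeasurable m345.aemeasurable]
  rw [lintegral_prod_mul h3.aemeasurable m45.aemeasurable]
  rw [lintegral_prod_mul h4.aemeasurable h5.aemeasurable]

def TT (p : ℕ) [Fact p.Prime] (n : ℕ) : Set (ℤ_[p] × ℤ_[p] × ℤ_[p] × ℤ_[p] × ℤ_[p]) :=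
  pBall p (n+2) ×ˢ (pSph p (n+1) ×ˢ (pSph p (n+1) ×ˢ (pBall p (n+1) ×ˢ pBall p (n+1))))

lemma measurableSet_TT (n : ℕ) : MeasurableSet (TT p n) :=
  (measurableSet_pBall _).prod ((measurableSet_pSph _).prod ((measurableSet_pSph _).prod
    ((measurableSet_pBall _).prod (measurableSet_pBall _))))

lemma TT_disjoint : Pairwise (Function.onFun Disjoint (TT p)) := by
  intro a b hab
  refine Set.disjoint_left.2 fun z hz hz' => ?_
  exact Set.disjoint_left.1 (pSph_disjoint (show a+1 ≠ b+1 by omega)) hz.2.1 hz'.2.1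

lemma zpow_neg_lt_one {k : ℕ} (hk : 0 < k) : (p:ℝ)^(-(k:ℤ)) < 1 := by
  have := zpow_lt_zpow_right₀ (show (1:ℝ) < p from hq1) (show -(k:ℤ) < 0 by omega)
  simpa using this

lemma region_eq :
    {z : ℤ_[p] × ℤ_[p] × ℤ_[p] × ℤ_[p] × ℤ_[p] |
        ‖z.1‖ < 1 ∧ ‖z.2.1‖ < 1 ∧ ‖z.2.2.1‖ < 1 ∧ ‖z.2.2.2.1‖ < 1 ∧ ‖z.2.2.2.2‖ < 1 ∧
        ‖z.1‖ < ‖z.2.1‖ ∧ ‖z.2.1‖ = ‖z.2.2.1‖ ∧ ‖z.2.2.2.1‖ ≤ ‖z.2.1‖ ∧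
        ‖z.2.2.2.2‖ ≤ ‖z.2.1‖} = ⋃ n : ℕ, TT p n := by
  ext ⟨x, y, y1, y2, y3⟩
  simp only [Set.mem_setOf_eq, Set.mem_iUnion]
  constructor
  · rintro ⟨hx1, hy1, hy11, hy21, hy31, hxy, hyy1, hy2y, hy3y⟩
    have hy0 : y ≠ 0 := by
      intro h
      rw [h, norm_zero] at hxy
      exact absurd hxy (not_lt.mpr (norm_nonneg x))
    have hval := PadicInt.norm_eq_zpow_neg_valuation hy0
    have hvnn : 0 ≤ y.valuation := Nat.zero_le _
    have hv1 : 1 ≤ y.valuation := by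
      by_contra h
      push_neg at h
      have hv0 : y.valuation = 0 := by omega
      rw [hval, hv0] at hy1
      simp at hy1
    set n : ℕ := (y.valuation - 1) with hn
    have hvn : y.valuation = (n:ℤ) + 1 := by omega
    have hynorm : ‖y‖ = (p:ℝ)^(-((n+1:ℕ):ℤ)) := by
      rw [hval, hvn]; congr 1
    refine ⟨n, ?_, ?_, ?_, ?_, ?_⟩
    · show ‖x‖ ≤ (p:ℝ)^(-((n+2:ℕ):ℤ))
      rw [hynorm] at hxy
      have := (PadicInt.norm_lt_pow_iff_norm_le_pow_sub_one x (-((n+1:ℕ):ℤ))).mp hxy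
      convert this using 2
      omega
    · exact mem_pSph_iff.mpr hynorm
    · exact mem_pSph_iff.mpr (hyy1 ▸ hynorm)
    · show ‖y2‖ ≤ (p:ℝ)^(-((n+1:ℕ):ℤ))
      rw [← hynorm]; exact hy2y
    · show ‖y3‖ ≤ (p:ℝ)^(-((n+1:ℕ):ℤ))
      rw [← hynorm]; exact hy3y
  · rintro ⟨n, hx, hy, hy1, hy2, hy3⟩
    replace hx : ‖x‖ ≤ (p:ℝ)^(-((n+2:ℕ):ℤ)) := hx
    replace hy : ‖y‖ = (p:ℝ)^(-((n+1:ℕ):ℤ)) := mem_pSph_iff.mp hy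
    replace hy1 : ‖y1‖ = (p:ℝ)^(-((n+1:ℕ):ℤ)) := mem_pSph_iff.mp hy1
    replace hy2 : ‖y2‖ ≤ (p:ℝ)^(-((n+1:ℕ):ℤ)) := hy2
    replace hy3 : ‖y3‖ ≤ (p:ℝ)^(-((n+1:ℕ):ℤ)) := hy3
    have hstep : (p:ℝ)^(-((n+2:ℕ):ℤ)) < (p:ℝ)^(-((n+1:ℕ):ℤ)) :=
      zpow_lt_zpow_right₀ (show (1:ℝ) < p from hq1) (by push_cast; omega)
    have hlt1 : (p:ℝ)^(-((n+1:ℕ):ℤ)) < 1 := zpow_neg_lt_one (by omega)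
    have hlt2 : (p:ℝ)^(-((n+2:ℕ):ℤ)) < 1 := zpow_neg_lt_one (by omega)
    exact ⟨lt_of_le_of_lt hx hlt2, hy ▸ hlt1, hy1 ▸ hlt1,
      lt_of_le_of_lt hy2 hlt1, lt_of_le_of_lt hy3 hlt1,
      lt_of_le_of_lt hx (hy ▸ hstep), by rw [hy, hy1],
      hy ▸ hy2, hy ▸ hy3⟩

lemma TT_lintegral (ρ τ : ℝ) (hρ : 0 < ρ) (hτ : 0 < τ) (n : ℕ) :
    ∫⁻ z in TT p n, ENNReal.ofReal
        (‖z.1‖ ^ τ * ‖z.2.2.1‖ ^ (2*ρ) * (max ‖z.1‖ ‖z.2.1‖) ^ (2*ρ)) ∂padicHaar5 p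
    = ENNReal.ofReal ((1 - (p:ℝ)⁻¹) * ((p:ℝ)^(-(1:ℝ)-τ))^(n+2) / (1 - (p:ℝ)^(-(1:ℝ)-τ)))
      * ENNReal.ofReal ((1 - (p:ℝ)⁻¹) * ((p:ℝ)^(-(1:ℝ)-(2*ρ)))^(n+1))
      * ENNReal.ofReal ((1 - (p:ℝ)⁻¹) * ((p:ℝ)^(-(1:ℝ)-(2*ρ)))^(n+1))
      * ENNReal.ofReal (((p:ℝ)⁻¹)^(n+1)) * ENNReal.ofReal (((p:ℝ)⁻¹)^(n+1)) := by
  have mF1 : Measurable fun x : ℤ_[p] => ENNReal.ofReal (‖x‖ ^ τ) :=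
    (ENNReal.continuous_ofReal.comp
      (continuous_norm.rpow_const (fun x => Or.inr hτ.le))).measurable
  have mF2 : Measurable fun x : ℤ_[p] => ENNReal.ofReal (‖x‖ ^ (2*ρ)) :=
    (ENNReal.continuous_ofReal.comp
      (continuous_norm.rpow_const (fun x => Or.inr (by positivity)))).measurable
  have hcongr : ∀ z ∈ TT p n, ENNReal.ofReal
      (‖z.1‖ ^ τ * ‖z.2.2.1‖ ^ (2*ρ) * (max ‖z.1‖ ‖z.2.1‖) ^ (2*ρ))
      = ENNReal.ofReal (‖z.1‖ ^ τ) * ENNReal.ofReal (‖z.2.1‖ ^ (2*ρ)) *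
        ENNReal.ofReal (‖z.2.2.1‖ ^ (2*ρ)) * (1:ℝ≥0∞) * (1:ℝ≥0∞) := by
    rintro ⟨x, y, y1, y2, y3⟩ ⟨hx, hy, _⟩
    replace hx : ‖x‖ ≤ (p:ℝ)^(-((n+2:ℕ):ℤ)) := hx
    replace hy : ‖y‖ = (p:ℝ)^(-((n+1:ℕ):ℤ)) := mem_pSph_iff.mp hy
    have hstep : (p:ℝ)^(-((n+2:ℕ):ℤ)) < (p:ℝ)^(-((n+1:ℕ):ℤ)) :=
      zpow_lt_zpow_right₀ (show (1:ℝ) < p from hq1) (by push_cast; omega)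
    have hmax : max ‖x‖ ‖y‖ = ‖y‖ :=
      max_eq_right (le_of_lt (lt_of_le_of_lt hx (hy ▸ hstep)))
    show ENNReal.ofReal (‖x‖ ^ τ * ‖y1‖ ^ (2*ρ) * (max ‖x‖ ‖y‖) ^ (2*ρ)) = _
    rw [hmax, mul_one, mul_one, ENNReal.ofReal_mul (by positivity),
      ENNReal.ofReal_mul (by positivity)]
    ring
  rw [setLIntegral_congr_fun (measurableSet_TT n) hcongr]
  rw [show (TT p n) = pBall p (n+2) ×ˢ (pSph p (n+1) ×ˢ (pSph p (n+1) ×ˢ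
    (pBall p (n+1) ×ˢ pBall p (n+1)))) from rfl]
  rw [lintegral_prod5 _ _ _ _ _ mF1 mF2 mF2 measurable_const measurable_const]
  rw [ball_lintegral_value τ hτ (n+2), sphere_lintegral_value (2*ρ) (n+1),
    setLIntegral_one, measure_pBall' (n+1)]

lemma rpow_pow (a : ℝ) (k : ℕ) : ((p:ℝ) ^ a) ^ k = (p:ℝ) ^ (a * k) := by
  rw [← Real.rpow_natCast ((p:ℝ)^a), ← Real.rpow_mul hq0.le]

lemma inv_pow_eq (k : ℕ) : ((p:ℝ)⁻¹)^k = (p:ℝ) ^ (-(k:ℝ)) := by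
  rw [Real.rpow_neg hq0.le, Real.rpow_natCast, inv_pow]

/-- On the region `Ω₄ ⊆ (pℤ_p)⁵` where the valuations satisfy `Y < X`, `Y = Ỹ₁`,
`Y ≤ Ỹ₂`, `Y ≤ Ỹ₃` (equivalently, in terms of absolute values, `|x| < |y|`,
`|y| = |ỹ₁|`, `|ỹ₂| ≤ |y|`, `|ỹ₃| ≤ |y|`),
`∫_{Ω₄} |x|^τ |ỹ₁|^{2ρ} max(|x|,|y|)^{2ρ} dμ
  = q^{-6-2τ-4ρ}(1-q⁻¹)³ / ((1-q^{-1-τ})(1-q^{-5-τ-4ρ}))` with `q = p`. -/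
theorem integral_Omega4 (p : ℕ) [Fact p.Prime] (ρ τ : ℝ) (hρ : 0 < ρ) (hτ : 0 < τ) :
    ∫ z in {z : ℤ_[p] × ℤ_[p] × ℤ_[p] × ℤ_[p] × ℤ_[p] |
        ‖z.1‖ < 1 ∧ ‖z.2.1‖ < 1 ∧ ‖z.2.2.1‖ < 1 ∧ ‖z.2.2.2.1‖ < 1 ∧ ‖z.2.2.2.2‖ < 1 ∧
        ‖z.1‖ < ‖z.2.1‖ ∧ ‖z.2.1‖ = ‖z.2.2.1‖ ∧ ‖z.2.2.2.1‖ ≤ ‖z.2.1‖ ∧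
        ‖z.2.2.2.2‖ ≤ ‖z.2.1‖},
        ‖z.1‖ ^ τ * ‖z.2.2.1‖ ^ (2 * ρ) * (max ‖z.1‖ ‖z.2.1‖) ^ (2 * ρ)
        ∂(padicHaar5 p) =
      (p : ℝ) ^ (-6 - 2 * τ - 4 * ρ) * (1 - (p : ℝ)⁻¹) ^ 3 /
        ((1 - (p : ℝ) ^ (-1 - τ)) * (1 - (p : ℝ) ^ (-5 - τ - 4 * ρ))) := by
  have h1 : (1:ℝ) < (p:ℝ) := hq1
  have h0 : (0:ℝ) < (p:ℝ) := hq0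
  have hc : (0:ℝ) ≤ 1 - (p:ℝ)⁻¹ := by
    rw [sub_nonneg]; exact inv_le_one_of_one_le₀ h1.le
  have hA0 : (0:ℝ) < (p:ℝ) ^ (-1-τ) := Real.rpow_pos_of_pos h0 _
  have hA1 : (p:ℝ) ^ (-1-τ) < 1 := Real.rpow_lt_one_of_one_lt_of_neg h1 (by linarith)
  have hC0 : (0:ℝ) < (p:ℝ) ^ (-(1:ℝ)-(2*ρ)) := Real.rpow_pos_of_pos h0 _
  have hB0 : (0:ℝ) < (p:ℝ) ^ (-5-τ-4*ρ) := Real.rpow_pos_of_pos h0 _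
  have hB1 : (p:ℝ) ^ (-5-τ-4*ρ) < 1 := Real.rpow_lt_one_of_one_lt_of_neg h1 (by linarith)
  have hK0 : (0:ℝ) ≤ (1 - (p:ℝ)⁻¹)^3 * (p:ℝ) ^ (-6-2*τ-4*ρ) / (1 - (p:ℝ) ^ (-1-τ)) :=
    div_nonneg (mul_nonneg (pow_nonneg hc 3) (Real.rpow_pos_of_pos h0 _).le)
      (by linarith)
  -- Bochner → lintegral
  have hf_cont : Continuous fun z : ℤ_[p] × ℤ_[p] × ℤ_[p] × ℤ_[p] × ℤ_[p] =>
      ‖z.1‖ ^ τ * ‖z.2.2.1‖ ^ (2 * ρ) * (max ‖z.1‖ ‖z.2.1‖) ^ (2 * ρ) := by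
    have n1 : Continuous fun z : ℤ_[p] × ℤ_[p] × ℤ_[p] × ℤ_[p] × ℤ_[p] => ‖z.1‖ :=
      continuous_norm.comp continuous_fst
    have n2 : Continuous fun z : ℤ_[p] × ℤ_[p] × ℤ_[p] × ℤ_[p] × ℤ_[p] => ‖z.2.1‖ :=
      continuous_norm.comp (continuous_fst.comp continuous_snd)
    have n3 : Continuous fun z : ℤ_[p] × ℤ_[p] × ℤ_[p] × ℤ_[p] × ℤ_[p] => ‖z.2.2.1‖ :=
      continuous_norm.comp (continuous_fst.comp (continuous_snd.comp continuous_snd))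
    exact ((n1.rpow_const (fun _ => Or.inr hτ.le)).mul
      (n3.rpow_const (fun _ => Or.inr (by positivity)))).mul
      ((n1.max n2).rpow_const (fun _ => Or.inr (by positivity)))
  rw [integral_eq_lintegral_of_nonneg_ae
    (ae_of_all _ (fun z => by positivity)) hf_cont.aestronglyMeasurable]
  rw [region_eq, lintegral_iUnion measurableSet_TT TT_disjoint,
    tsum_congr (TT_lintegral ρ τ hρ hτ)]
  set K : ℝ := (1 - (p:ℝ)⁻¹)^3 * (p:ℝ) ^ (-6-2*τ-4*ρ) / (1 - (p:ℝ) ^ (-1-τ)) with hK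
  have hterm : ∀ n : ℕ,
      ENNReal.ofReal ((1 - (p:ℝ)⁻¹) * ((p:ℝ)^(-(1:ℝ)-τ))^(n+2) / (1 - (p:ℝ)^(-(1:ℝ)-τ)))
      * ENNReal.ofReal ((1 - (p:ℝ)⁻¹) * ((p:ℝ)^(-(1:ℝ)-(2*ρ)))^(n+1))
      * ENNReal.ofReal ((1 - (p:ℝ)⁻¹) * ((p:ℝ)^(-(1:ℝ)-(2*ρ)))^(n+1))
      * ENNReal.ofReal (((p:ℝ)⁻¹)^(n+1)) * ENNReal.ofReal (((p:ℝ)⁻¹)^(n+1))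
      = ENNReal.ofReal (K * ((p:ℝ) ^ (-5-τ-4*ρ))^n) := by
    intro n
    have ht1 : (0:ℝ) ≤ (1 - (p:ℝ)⁻¹) * ((p:ℝ)^(-(1:ℝ)-τ))^(n+2) / (1 - (p:ℝ)^(-(1:ℝ)-τ)) :=
      div_nonneg (mul_nonneg hc (by positivity)) (by linarith)
    have ht2 : (0:ℝ) ≤ (1 - (p:ℝ)⁻¹) * ((p:ℝ)^(-(1:ℝ)-(2*ρ)))^(n+1) :=
      mul_nonneg hc (by positivity)
    rw [← ENNReal.ofReal_mul ht1, ← ENNReal.ofReal_mul (mul_nonneg ht1 ht2),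
      ← ENNReal.ofReal_mul (mul_nonneg (mul_nonneg ht1 ht2) ht2),
      ← ENNReal.ofReal_mul (mul_nonneg (mul_nonneg (mul_nonneg ht1 ht2) ht2) (by positivity))]
    congr 1
    have key : ((p:ℝ)^(-(1:ℝ)-τ))^(n+2) * (((p:ℝ)^(-(1:ℝ)-(2*ρ)))^(n+1) *
        ((p:ℝ)^(-(1:ℝ)-(2*ρ)))^(n+1) * (((p:ℝ)⁻¹)^(n+1) * ((p:ℝ)⁻¹)^(n+1)))
        = (p:ℝ) ^ (-6-2*τ-4*ρ) * ((p:ℝ) ^ (-5-τ-4*ρ))^n := by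
      rw [rpow_pow, rpow_pow, rpow_pow, inv_pow_eq,
        ← Real.rpow_add h0, ← Real.rpow_add h0, ← Real.rpow_add h0, ← Real.rpow_add h0,
        ← Real.rpow_add h0]
      congr 1
      push_cast
      ring
    calc (1 - (p:ℝ)⁻¹) * ((p:ℝ)^(-(1:ℝ)-τ))^(n+2) / (1 - (p:ℝ)^(-(1:ℝ)-τ))
          * ((1 - (p:ℝ)⁻¹) * ((p:ℝ)^(-(1:ℝ)-(2*ρ)))^(n+1))
          * ((1 - (p:ℝ)⁻¹) * ((p:ℝ)^(-(1:ℝ)-(2*ρ)))^(n+1))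
          * ((p:ℝ)⁻¹)^(n+1) * ((p:ℝ)⁻¹)^(n+1)
        = (1 - (p:ℝ)⁻¹)^3 / (1 - (p:ℝ)^(-(1:ℝ)-τ)) *
          (((p:ℝ)^(-(1:ℝ)-τ))^(n+2) * (((p:ℝ)^(-(1:ℝ)-(2*ρ)))^(n+1) *
            ((p:ℝ)^(-(1:ℝ)-(2*ρ)))^(n+1) * (((p:ℝ)⁻¹)^(n+1) * ((p:ℝ)⁻¹)^(n+1)))) := by
          ring
      _ = K * ((p:ℝ) ^ (-5-τ-4*ρ))^n := by rw [key, hK]; ring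
  rw [tsum_congr hterm, ← ENNReal.ofReal_tsum_of_nonneg
      (fun n => mul_nonneg hK0 (pow_nonneg hB0.le n))
      ((summable_geometric_of_lt_one hB0.le hB1).mul_left K),
    _root_.tsum_mul_left, tsum_geometric_of_lt_one hB0.le hB1,
    ENNReal.toReal_ofReal (mul_nonneg hK0 (inv_nonneg.mpr (by linarith)))]
  rw [hK]
  have hAne : 1 - (p:ℝ) ^ (-1-τ) ≠ 0 := by linarith
  have hBne : 1 - (p:ℝ) ^ (-5-τ-4*ρ) ≠ 0 := by linarith
  field_simp
end
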